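/- Let H be a separable complex Hilbert space and ∂S(H) the set of rank-one orthogonal projections with its natural topology 𝒯 (the operator-norm topology, equivalently the initial topology of the transition-probability functions). Then the Borel σ-algebra Ξ(𝒯) equals the σ-algebra Σ generated by the family of functions h_Q : ∂S(H) → ℝ, h_Q(P) = tr(PQ), Q ∈ ∂S(H) (Misra's theorem). -/

import Mathlib

open scoped InnerProductSpace
open Metric

/-- The rank-one operator `χ ↦ ⟪φ, χ⟫ • φ` (orthogonal projection onto `ℂ φ` when `‖φ‖ = 1`). -/
noncomputable def proj (H : Type) [NormedAddCommGroup H] [InnerProductSpace ℂ H] (φ : H) :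
    H →L[ℂ] H := (innerSL ℂ φ).smulRight φ

/-- Equivalence of unit vectors up to a phase factor. -/
def phaseSetoid (H : Type) [NormedAddCommGroup H] [InnerProductSpace ℂ H] :
    Setoid (sphere (0 : H) 1) where
  r φ ψ := ∃ c : ℂ, ‖c‖ = 1 ∧ (φ : H) = c • (ψ : H)
  iseqv := by
    constructor
    · intro φ; exact ⟨1, by simp⟩
    · rintro φ ψ ⟨c, hc, h⟩
      have hc0 : c ≠ 0 := by intro h0; simp [h0] at hc
      exact ⟨c⁻¹, by simp [hc], by rw [h, smul_smul, inv_mul_cancel₀ hc0, one_smul]⟩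
    · rintro φ ψ ξ ⟨c, hc, h⟩ ⟨d, hd, h'⟩
      exact ⟨c * d, by simp [hc, hd], by rw [h, h', smul_smul]⟩

/-- The set of rank-one orthogonal projections (pure states) on `H`. -/
abbrev PureState (H : Type) [NormedAddCommGroup H] [InnerProductSpace ℂ H] : Type :=
  {P : H →L[ℂ] H // ∃ φ : H, ‖φ‖ = 1 ∧ P = proj H φ}

/-- The transition probability `h_Q(P) = tr(PQ) = ⟪φ, P φ⟫` where `Q = |φ⟩⟨φ|`. -/
noncomputable def transProb (H : Type) [NormedAddCommGroup H] [InnerProductSpace ℂ H]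
    (P Q : PureState H) : ℝ :=
  (⟪Q.2.choose, (P : H →L[ℂ] H) Q.2.choose⟫_ℂ).re

/-- The weak topology `𝒯₀` on the pure states: the coarsest topology making every
transition-probability function `P ↦ h_Q(P) = tr(PQ)` continuous. -/
noncomputable def weakTop (H : Type) [NormedAddCommGroup H] [InnerProductSpace ℂ H] :
    TopologicalSpace (PureState H) :=
  ⨅ Q : PureState H, TopologicalSpace.induced (fun P => transProb H P Q) inferInstance

section Aux
variable {H : Type} [NormedAddCommGroup H] [InnerProductSpace ℂ H]

lemma proj_apply (φ χ : H) : proj H φ χ = ⟪φ, χ⟫_ℂ • φ := rfl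

lemma proj_phase {c : ℂ} (hc : ‖c‖ = 1) (φ : H) : proj H (c • φ) = proj H φ := by
  ext χ
  have : (starRingEnd ℂ) c * c = 1 := by
    rw [mul_comm, Complex.mul_conj']
    norm_cast
    simp [hc]
  show ⟪c • φ, χ⟫_ℂ • (c • φ) = ⟪φ, χ⟫_ℂ • φ
  rw [inner_smul_left]
  calc ((starRingEnd ℂ) c * ⟪φ, χ⟫_ℂ) • (c • φ) = (((starRingEnd ℂ) c * c) * ⟪φ, χ⟫_ℂ) • φ := by
        rw [smul_smul]; ring_nf
    _ = ⟪φ, χ⟫_ℂ • φ := by rw [this, one_mul]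

lemma norm_proj_le (φ : H) : ‖proj H φ‖ ≤ ‖φ‖ * ‖φ‖ := by
  rw [proj, ContinuousLinearMap.norm_smulRight_apply, innerSL_apply_norm]

lemma proj_sub_proj (φ ψ : H) :
    proj H φ - proj H ψ = (innerSL ℂ φ).smulRight (φ - ψ) + (innerSL ℂ (φ - ψ)).smulRight ψ := by
  ext χ
  simp only [ContinuousLinearMap.sub_apply, ContinuousLinearMap.add_apply,
    ContinuousLinearMap.smulRight_apply, innerSL_apply_apply, proj_apply, inner_sub_left,
    smul_sub, sub_smul]
  abel

lemma norm_proj_sub_proj_le {φ ψ : H} (hφ : ‖φ‖ ≤ 1) (hψ : ‖ψ‖ ≤ 1) :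
    ‖proj H φ - proj H ψ‖ ≤ 2 * ‖φ - ψ‖ := by
  rw [proj_sub_proj]
  refine (norm_add_le _ _).trans ?_
  rw [ContinuousLinearMap.norm_smulRight_apply, ContinuousLinearMap.norm_smulRight_apply,
    innerSL_apply_norm, innerSL_apply_norm]
  nlinarith [norm_nonneg (φ - ψ), norm_nonneg φ, norm_nonneg ψ]

lemma inner_proj_self (φ ψ : H) : ⟪ψ, proj H φ ψ⟫_ℂ = (‖⟪φ, ψ⟫_ℂ‖ : ℂ) ^ 2 := by
  rw [proj_apply, inner_smul_right, ← inner_conj_symm φ ψ, mul_comm, Complex.mul_conj']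
  norm_cast
  rw [RCLike.norm_conj]

lemma lower_bound {φ ψ : H} (hφ : ‖φ‖ = 1) (hψ : ‖ψ‖ = 1) :
    1 - ‖⟪φ, ψ⟫_ℂ‖ ^ 2 ≤ ‖proj H φ - proj H ψ‖ ^ 2 := by
  set s := ⟪φ, ψ⟫_ℂ with hs
  have h1 : (proj H φ - proj H ψ) ψ = s • φ - ψ := by
    have : ⟪ψ, ψ⟫_ℂ = 1 := by
      rw [inner_self_eq_norm_sq_to_K, hψ]; norm_num
    simp [proj_apply, this, hψ, hs]
  have h2 : ‖s • φ - ψ‖ ^ 2 = 1 - ‖s‖ ^ 2 := by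
    rw [norm_sub_sq (𝕜 := ℂ), inner_smul_left]
    have : RCLike.re ((starRingEnd ℂ) s * s) = ‖s‖ ^ 2 := by
      rw [mul_comm, Complex.mul_conj']
      norm_cast
    rw [this, norm_smul, hφ, hψ]
    simp; ring
  have h3 : ‖(proj H φ - proj H ψ) ψ‖ ≤ ‖proj H φ - proj H ψ‖ := by
    calc ‖(proj H φ - proj H ψ) ψ‖ ≤ ‖proj H φ - proj H ψ‖ * ‖ψ‖ :=
          ContinuousLinearMap.le_opNorm _ _
      _ = _ := by rw [hψ, mul_one]
  rw [← h2, ← h1]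
  have := norm_nonneg ((proj H φ - proj H ψ) ψ)
  nlinarith

lemma upper_bound {φ ψ : H} (hφ : ‖φ‖ = 1) (hψ : ‖ψ‖ = 1) :
    ‖proj H φ - proj H ψ‖ ^ 2 ≤ 8 * (1 - ‖⟪φ, ψ⟫_ℂ‖ ^ 2) := by
  set s := ⟪φ, ψ⟫_ℂ with hs
  have hsle : ‖s‖ ≤ 1 := by
    calc ‖s‖ ≤ ‖φ‖ * ‖ψ‖ := norm_inner_le_norm _ _
      _ = 1 := by rw [hφ, hψ, mul_one]
  by_cases h0 : s = 0
  · have hn : ‖proj H φ - proj H ψ‖ ≤ 2 := by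
      calc ‖proj H φ - proj H ψ‖ ≤ ‖proj H φ‖ + ‖proj H ψ‖ := norm_sub_le _ _
        _ ≤ ‖φ‖ * ‖φ‖ + ‖ψ‖ * ‖ψ‖ := add_le_add (norm_proj_le _) (norm_proj_le _)
        _ = 2 := by rw [hφ, hψ]; norm_num
    have := norm_nonneg (proj H φ - proj H ψ)
    rw [h0]
    simp only [norm_zero]
    nlinarith
  · set c : ℂ := s / ‖s‖ with hc
    have hsn : (‖s‖ : ℂ) ≠ 0 := by
      simpa using h0
    have hcn : ‖c‖ = 1 := by
      rw [hc, norm_div]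
      field_simp
      simp
    have hinner : ⟪c • φ, ψ⟫_ℂ = (‖s‖ : ℂ) := by
      rw [inner_smul_left, ← hs, hc, map_div₀, Complex.conj_ofReal]
      rw [div_mul_eq_mul_div, mul_comm, Complex.mul_conj']
      rw [sq]
      field_simp
    have hnsub : ‖c • φ - ψ‖ ^ 2 = 2 - 2 * ‖s‖ := by
      rw [norm_sub_sq (𝕜 := ℂ), hinner, norm_smul, hcn, hφ, hψ]
      simp [RCLike.ofReal_re]
      ring
    have hle : ‖proj H φ - proj H ψ‖ ≤ 2 * ‖c • φ - ψ‖ := by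
      rw [← proj_phase hcn φ]
      exact norm_proj_sub_proj_le (by rw [norm_smul, hcn, hφ, mul_one]) (le_of_eq hψ)
    have h2 := norm_nonneg (proj H φ - proj H ψ)
    have h3 := norm_nonneg (c • φ - ψ)
    have h4 := norm_nonneg s
    have h5 : ‖proj H φ - proj H ψ‖ ^ 2 ≤ (2 * ‖c • φ - ψ‖) ^ 2 :=
      pow_le_pow_left₀ h2 hle 2
    nlinarith

lemma transProb_eq (P Q : PureState H) :
    transProb H P Q = ‖⟪P.2.choose, Q.2.choose⟫_ℂ‖ ^ 2 := by
  have h := inner_proj_self (H := H) P.2.choose Q.2.choose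
  rw [← P.2.choose_spec.2] at h
  rw [transProb, h]
  norm_cast

lemma dist_eq_norm_proj (P Q : PureState H) :
    dist P Q = ‖proj H P.2.choose - proj H Q.2.choose‖ := by
  rw [Subtype.dist_eq, dist_eq_norm, ← P.2.choose_spec.2, ← Q.2.choose_spec.2]

lemma tp_lower (P Q : PureState H) : 1 - transProb H P Q ≤ dist P Q ^ 2 := by
  rw [transProb_eq, dist_eq_norm_proj]
  exact lower_bound P.2.choose_spec.1 Q.2.choose_spec.1

lemma tp_upper (P Q : PureState H) : dist P Q ^ 2 ≤ 8 * (1 - transProb H P Q) := by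
  rw [transProb_eq, dist_eq_norm_proj]
  exact upper_bound P.2.choose_spec.1 Q.2.choose_spec.1

lemma transProb_continuous (Q : PureState H) :
    Continuous fun P : PureState H => transProb H P Q := by
  have h1 : Continuous fun A : H →L[ℂ] H => (⟪Q.2.choose, A Q.2.choose⟫_ℂ).re :=
    Complex.continuous_re.comp ((innerSL ℂ Q.2.choose).continuous.comp
      (ContinuousLinearMap.apply ℂ H Q.2.choose).continuous)
  exact h1.comp continuous_subtype_val

end Aux

set_option linter.unnecessarySimpa false in
set_option linter.deprecated false in
/-- Misra's theorem: For separable `H`, the Borel σ-algebra of the set of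
rank-one projections (with its natural topology, i.e. the operator-norm topology, which
coincides with the weak topology of the transition-probability functions) equals the
σ-algebra generated by the functions `h_Q : P ↦ tr(PQ)`. -/
theorem stmt19 (H : Type) [NormedAddCommGroup H] [InnerProductSpace ℂ H] [CompleteSpace H]
    [TopologicalSpace.SeparableSpace H] :
    borel (PureState H) =
      ⨆ Q : PureState H,
        MeasurableSpace.comap (fun P => transProb H P Q) (borel ℝ) := by
  -- separability of PureState H
  haveI : SecondCountableTopology H := UniformSpace.secondCountable_of_separable H
  set pmap : sphere (0 : H) 1 → PureState H := fun φ =>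
    ⟨proj H (φ : H), (φ : H), by simpa using φ.2, rfl⟩ with hpmap
  have pcont : Continuous pmap := by
    refine (LipschitzWith.of_dist_le_mul (K := 2) fun x y => ?_).continuous
    have hx : ‖(x : H)‖ = 1 := by simpa using x.2
    have hy : ‖(y : H)‖ = 1 := by simpa using y.2
    rw [hpmap, Subtype.dist_eq, dist_eq_norm, Subtype.dist_eq, dist_eq_norm]
    simpa using norm_proj_sub_proj_le (le_of_eq hx) (le_of_eq hy)
  have psurj : Function.Surjective pmap := by
    rintro ⟨A, hA⟩
    obtain ⟨φ, hφ, rfl⟩ := hA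
    exact ⟨⟨φ, by simpa using hφ⟩, rfl⟩
  haveI : TopologicalSpace.SeparableSpace (PureState H) :=
    psurj.denseRange.separableSpace pcont
  refine le_antisymm ?_ (iSup_le fun Q => MeasurableSpace.comap_le_iff_le_map.2 <|
    (transProb_continuous Q).borel_measurable)
  -- borel ≤ Σ
  set m : MeasurableSpace (PureState H) := ⨆ Q : PureState H,
    MeasurableSpace.comap (fun P => transProb H P Q) (borel ℝ) with hm
  rw [borel]
  refine MeasurableSpace.generateFrom_le fun U hU => ?_
  obtain ⟨D, hDc, hDd⟩ := TopologicalSpace.exists_countable_dense (PureState H)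
  set B : PureState H → ℕ → Set (PureState H) := fun Q n =>
    (fun P => transProb H P Q) ⁻¹' Set.Ioi (1 - (1 : ℝ) / (n + 1)) with hB
  have measB : ∀ Q n, @MeasurableSet _ m (B Q n) := by
    intro Q n
    rw [hm]
    refine le_iSup (fun Q => MeasurableSpace.comap
      (fun P => transProb H P Q) (borel ℝ)) Q _ ?_
    refine ⟨Set.Ioi (1 - (1 : ℝ) / (n + 1)), MeasurableSpace.measurableSet_generateFrom ?_, rfl⟩
    simp only [Set.mem_setOf_eq]
    exact isOpen_Ioi
  set 𝒮 : Set (Set (PureState H)) :=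
    {S | ∃ Q ∈ D, ∃ n : ℕ, S = B Q n ∧ S ⊆ U} with h𝒮
  have hcnt : 𝒮.Countable := by
    refine Set.Countable.mono ?_ (((hDc.prod Set.countable_univ).image
      fun p : PureState H × ℕ => B p.1 p.2))
    rintro S ⟨Q, hQ, n, rfl, -⟩
    exact ⟨(Q, n), ⟨hQ, trivial⟩, rfl⟩
  have hUeq : U = ⋃₀ 𝒮 := by
    ext P
    constructor
    · intro hP
      have hU' : IsOpen U := hU
      obtain ⟨r, hr, hball⟩ := (Metric.isOpen_iff.1 hU') P hP
      obtain ⟨n, hn⟩ := exists_nat_one_div_lt (show (0 : ℝ) < r ^ 2 / 36 by positivity)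
      set ε : ℝ := 1 / (n + 1) with hε
      have hεpos : (0 : ℝ) < ε := by positivity
      obtain ⟨Q, hQD, hQP⟩ := hDd.exists_dist_lt P (Real.sqrt_pos.2 hεpos)
      have hd2 : dist P Q ^ 2 < ε := by
        have := Real.sq_sqrt hεpos.le
        nlinarith [dist_nonneg (x := P) (y := Q), dist_comm P Q ▸ hQP,
          Real.sqrt_nonneg ε]
      have hPB : P ∈ B Q n := by
        have := tp_lower P Q
        simp only [hB, Set.mem_preimage, Set.mem_Ioi]
        linarith
      have hsub : B Q n ⊆ U := by
        intro P' hP'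
        apply hball
        simp only [Metric.mem_ball]
        have h1 : 1 - transProb H P' Q < ε := by
          have h := hP'
          simp only [hB, Set.mem_preimage, Set.mem_Ioi, ← hε] at h
          linarith
        have h2 : dist P' Q ^ 2 < 8 * ε := by
          have := tp_upper P' Q
          linarith
        have h3 : dist P' Q < r / 2 := by
          refine lt_of_pow_lt_pow_left₀ 2 (by positivity) ?_
          have hq : (r / 2) ^ 2 = r ^ 2 / 4 := by ring
          rw [hq]
          linarith
        have h4 : dist P Q < r / 6 := by
          refine lt_of_pow_lt_pow_left₀ 2 (by positivity) ?_
          have hq : (r / 6) ^ 2 = r ^ 2 / 36 := by ring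
          rw [hq]
          linarith
        calc dist P' P ≤ dist P' Q + dist Q P := dist_triangle _ _ _
          _ < r / 2 + r / 6 := by rw [dist_comm Q P]; exact add_lt_add h3 h4
          _ < r := by linarith
      exact ⟨B Q n, ⟨Q, hQD, n, rfl, hsub⟩, hPB⟩
    · rintro ⟨S, ⟨Q, -, n, rfl, hsub⟩, hPS⟩
      exact hsub hPS
  rw [hUeq]
  exact MeasurableSet.sUnion hcnt fun S hS => by
    obtain ⟨Q, -, n, rfl, -⟩ := hS
    exact measB Q n
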